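/- Let (X, dist) be a pseudometric space, ε > 0, and x_0, …, x_n points of X. Let S be the greedy ε-net index set of x_0, …, x_n, and for δ > 0 let N(δ) denote the minimal cardinality of a subset C ⊆ {x_0, …, x_n} such that every x_t satisfies dist(x_t, c) ≤ δ for some c ∈ C. Then N(ε) ≤ |S| ≤ N(ε/2). -/

import Mathlib

/-- The greedy `ε`-net index set of the points `x 0, x 1, …`:
`0` belongs to it, and `t ≥ 1` belongs to it iff `dist (x t) (x s) > ε`
for every earlier member `s` of the set. -/
def greedyNet {X : Type*} [PseudoMetricSpace X] (x : ℕ → X) (ε : ℝ) : ℕ → Prop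
  | t => t = 0 ∨ ∀ s, (h : s < t) → greedyNet x ε s → ε < dist (x t) (x s)

/-- The internal `δ`-covering number of the finite family `x 0, …, x n`:
the minimal cardinality of a set of indices `C ⊆ {0, …, n}` such that every
`x t`, `t ≤ n`, is within distance `δ` of some `x s`, `s ∈ C`. -/
noncomputable def internalCoveringNumber
    {X : Type*} [PseudoMetricSpace X] (x : ℕ → X) (n : ℕ) (δ : ℝ) : ℕ :=
  sInf {k : ℕ | ∃ C : Finset ℕ, (∀ s ∈ C, s ≤ n) ∧
    (∀ t ≤ n, ∃ s ∈ C, dist (x t) (x s) ≤ δ) ∧ C.card = k}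

lemma greedyNet_iff {X : Type*} [PseudoMetricSpace X] (x : ℕ → X) (ε : ℝ) (t : ℕ) :
    greedyNet x ε t ↔ t = 0 ∨ ∀ s, s < t → greedyNet x ε s → ε < dist (x t) (x s) := by
  rw [greedyNet]

lemma greedyNet_sep {X : Type*} [PseudoMetricSpace X] {x : ℕ → X} {ε : ℝ} {s t : ℕ}
    (hst : s < t) (hs : greedyNet x ε s) (ht : greedyNet x ε t) :
    ε < dist (x t) (x s) := by
  rw [greedyNet_iff] at ht
  rcases ht with h0 | h
  · omega
  · exact h s hst hs

lemma greedyNet_cover {X : Type*} [PseudoMetricSpace X] (x : ℕ → X) {ε : ℝ} (hε : 0 < ε)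
    (t : ℕ) : ∃ s ≤ t, greedyNet x ε s ∧ dist (x t) (x s) ≤ ε := by
  by_cases ht : greedyNet x ε t
  · exact ⟨t, le_refl t, ht, by simp [hε.le]⟩
  · rw [greedyNet_iff] at ht
    push_neg at ht
    obtain ⟨-, s, hst, hs, hd⟩ := ht
    exact ⟨s, hst.le, hs, hd⟩

theorem coveringNumber_le_greedyNet_card_le_coveringNumber
    {X : Type*} [PseudoMetricSpace X] (x : ℕ → X) (ε : ℝ) (hε : 0 < ε) (n : ℕ) :
    internalCoveringNumber x n ε ≤ {t : ℕ | t ≤ n ∧ greedyNet x ε t}.ncard ∧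
    {t : ℕ | t ≤ n ∧ greedyNet x ε t}.ncard ≤ internalCoveringNumber x n (ε / 2) := by
  classical
  set S : Finset ℕ := (Finset.range (n+1)).filter (fun t => greedyNet x ε t) with hS
  have hSset : {t : ℕ | t ≤ n ∧ greedyNet x ε t} = ↑S := by
    ext t; simp [hS, Nat.lt_succ_iff]
  rw [hSset, Set.ncard_coe_finset]
  constructor
  · apply Nat.sInf_le
    refine ⟨S, ?_, ?_, rfl⟩
    · intro s hs; simp [hS, Nat.lt_succ_iff] at hs; exact hs.1
    · intro t ht
      obtain ⟨s, hst, hs, hd⟩ := greedyNet_cover x hε t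
      exact ⟨s, by simp [hS, Nat.lt_succ_iff]; exact ⟨hst.trans ht, hs⟩, hd⟩
  · apply le_csInf
    · exact ⟨n + 1, Finset.range (n+1), by simp [Nat.lt_succ_iff],
        fun t ht => ⟨t, by simp [Nat.lt_succ_iff, ht], by simp [hε.le, le_of_lt (half_pos hε)]⟩,
        Finset.card_range _⟩
    · rintro k ⟨C, hCn, hCcov, rfl⟩
      have : ∀ t, ∃ s, t ≤ n → s ∈ C ∧ dist (x t) (x s) ≤ ε / 2 := by
        intro t
        by_cases ht : t ≤ n
        · obtain ⟨s, hsC, hd⟩ := hCcov t ht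
          exact ⟨s, fun _ => ⟨hsC, hd⟩⟩
        · exact ⟨0, fun h => absurd h ht⟩
      choose f hf using this
      apply Finset.card_le_card_of_injOn f
      · intro t htS
        simp only [hS, Finset.mem_coe, Finset.mem_filter, Finset.mem_range, Nat.lt_succ_iff] at htS
        exact (hf t htS.1).1
      · intro a ha b hb hab
        simp only [hS, Finset.mem_coe, Finset.mem_filter, Finset.mem_range, Nat.lt_succ_iff] at ha hb
        by_contra hne
        have key : ∀ u v : ℕ, u < v → u ≤ n → v ≤ n → greedyNet x ε u → greedyNet x ε v →
            f u = f v → False := by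
          intro u v huv hun hvn hu hv hfuv
          have h1 := (hf u hun).2
          have h2 := (hf v hvn).2
          have hsep := greedyNet_sep huv hu hv
          have htri := dist_triangle (x v) (x (f v)) (x u)
          rw [hfuv] at h1
          linarith [dist_comm (x (f v)) (x u)]
        rcases lt_trichotomy a b with h | h | h
        · exact key a b h ha.1 hb.1 ha.2 hb.2 hab
        · exact hne h
        · exact key b a h hb.1 ha.1 hb.2 ha.2 hab.symm
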